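/- (Proposition 8.14, termination time from rapidly decreasing potential groups) There is a constant c > 0 such that the following holds. Let P be a population protocol with set of states Q, and let Φ = (Φ1,…,Φe) be a potential group for P of size e that is α-rapidly decreasing at every reachable configuration with at least m agents. Then for every initial configuration C₀ with n ≥ m agents, the expected number of interactions (in the probabilistic execution model) until the Markov chain started at C₀ reaches a terminal configuration is at most c·e·(√α·|Q| + α)·n². -/

import Mathlib

open scoped ENNReal Classical

namespace PaperPP

/-- Population computers (Angluin-style generalization). -/
structure PopComputer (σ : Type) where
  Q : Finset σ
  δ : Finset (Multiset σ × Multiset σ)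
  I : Finset σ
  O : Finset σ → Option Bool
  H : Multiset σ
  delta_mem : ∀ t ∈ δ, ∀ q ∈ t.1 + t.2, q ∈ Q
  delta_card : ∀ t ∈ δ, Multiset.card t.2 = Multiset.card t.1 ∧ 2 ≤ Multiset.card t.1
  delta_supp : ∀ t ∈ δ, ∃ a b : σ, ∀ q ∈ t.1, q = a ∨ q = b
  delta_fun : ∀ t ∈ δ, ∀ u ∈ δ, t.1 = u.1 → t.2 = u.2
  I_sub : I ⊆ Q
  H_mem : ∀ q ∈ H, q ∈ Q ∧ q ∉ I

variable {σ : Type}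

def Step (P : PopComputer σ) (C C' : Multiset σ) : Prop :=
  ∃ t ∈ P.δ, t.1 ≤ C ∧ C' = C - t.1 + t.2

def Reaches (P : PopComputer σ) : Multiset σ → Multiset σ → Prop :=
  Relation.ReflTransGen (Step P)

def Terminal (P : PopComputer σ) (C : Multiset σ) : Prop :=
  ∀ t ∈ P.δ, ¬ t.1 ≤ C

def IsInput (P : PopComputer σ) (C : Multiset σ) : Prop :=
  ∀ q ∈ C, q ∈ P.I

def Initial (P : PopComputer σ) (CI C0 : Multiset σ) : Prop :=
  ∃ CH : Multiset σ, (∀ q ∈ CH, q ∈ P.H) ∧ P.H ≤ CH ∧ C0 = CI + CH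

def ReachableConfig (P : PopComputer σ) (C : Multiset σ) : Prop :=
  ∃ CI C0, IsInput P CI ∧ Initial P CI C0 ∧ Reaches P C0 C

def IsRun (P : PopComputer σ) (f : ℕ → Multiset σ) : Prop :=
  ∀ i, Step P (f i) (f (i + 1)) ∨ (Terminal P (f i) ∧ f (i + 1) = f i)

def FairRun (P : PopComputer σ) (f : ℕ → Multiset σ) : Prop :=
  IsRun P f ∧ ∀ C : Multiset σ, {i | Reaches P (f i) C}.Infinite → ∃ j, f j = C

def StabilizesTo [DecidableEq σ] (P : PopComputer σ) (f : ℕ → Multiset σ) (b : Bool) : Prop :=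
  ∃ i, ∀ C, Reaches P (f i) C → P.O C.toFinset = some b

def HasOutput [DecidableEq σ] (P : PopComputer σ) (CI : Multiset σ) (b : Bool) : Prop :=
  ∀ C0 f, Initial P CI C0 → FairRun P f → f 0 = C0 → StabilizesTo P f b

def Decides [DecidableEq σ] (P : PopComputer σ) (φ : Multiset σ → Bool) : Prop :=
  ∀ CI, IsInput P CI → HasOutput P CI (φ CI)

def Bounded (P : PopComputer σ) : Prop :=
  ¬ ∃ f : ℕ → Multiset σ,
      (∃ CI, IsInput P CI ∧ Initial P CI (f 0)) ∧ ∀ i, Step P (f i) (f (i + 1))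

def Terminating (P : PopComputer σ) : Prop :=
  ∀ f : ℕ → Multiset σ, (∃ CI, IsInput P CI ∧ Initial P CI (f 0)) → FairRun P f →
    ∃ i, Terminal P (f i)

def Binary (P : PopComputer σ) : Prop := ∀ t ∈ P.δ, Multiset.card t.1 = 2

def ConsensusOutput [DecidableEq σ] (P : PopComputer σ) : Prop :=
  ∃ Q1 : Finset σ, Q1 ⊆ P.Q ∧ ∀ S : Finset σ, S ⊆ P.Q → S.Nonempty →
    P.O S = if S ⊆ Q1 then some true else if S ⊆ P.Q \ Q1 then some false else none

def MarkedConsensusOutput [DecidableEq σ] (P : PopComputer σ) : Prop :=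
  ∃ Q0 Q1 : Finset σ, Q0 ⊆ P.Q ∧ Q1 ⊆ P.Q ∧ Disjoint Q0 Q1 ∧
    ∀ S : Finset σ, S ⊆ P.Q → S.Nonempty →
      P.O S = if (S ∩ Q1).Nonempty ∧ S ∩ Q0 = ∅ then some true
        else if (S ∩ Q0).Nonempty ∧ S ∩ Q1 = ∅ then some false else none

def IsProtocol [DecidableEq σ] (P : PopComputer σ) : Prop :=
  Binary P ∧ P.H = 0 ∧ ConsensusOutput P

/-! Boolean circuits, used to measure the size of output functions. -/

inductive Circ (α : Type) : Type where
  | inp : α → Circ α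
  | tru : Circ α
  | fal : Circ α
  | neg : Circ α → Circ α
  | conj : Circ α → Circ α → Circ α
  | disj : Circ α → Circ α → Circ α

def Circ.eval {α : Type} (v : α → Bool) : Circ α → Bool
  | .inp a => v a
  | .tru => true
  | .fal => false
  | .neg c => !(Circ.eval v c)
  | .conj c d => Circ.eval v c && Circ.eval v d
  | .disj c d => Circ.eval v c || Circ.eval v d

def Circ.gates {α : Type} : Circ α → ℕ
  | .inp _ => 1
  | .tru => 1
  | .fal => 1
  | .neg c => Circ.gates c + 1
  | .conj c d => Circ.gates c + Circ.gates d + 1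
  | .disj c d => Circ.gates c + Circ.gates d + 1

noncomputable def outSize [DecidableEq σ] (P : PopComputer σ) : ℕ :=
  sInf {n | ∃ cd cv : Circ σ, Circ.gates cd + Circ.gates cv = n ∧
    ∀ S : Finset σ, S ⊆ P.Q →
      P.O S = if Circ.eval (fun q => decide (q ∈ S)) cd then
          some (Circ.eval (fun q => decide (q ∈ S)) cv) else none}

noncomputable def csize [DecidableEq σ] (P : PopComputer σ) : ℕ :=
  P.Q.card + Multiset.card P.H + outSize P + ∑ t ∈ P.δ, Multiset.card t.1

noncomputable def asize [DecidableEq σ] (P : PopComputer σ) : ℕ :=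
  P.Q.card + Multiset.card P.H + outSize P

/-! Probabilistic execution model. -/

def pairCount [DecidableEq σ] (C r : Multiset σ) : ℕ :=
  (Multiset.powersetCard 2 C).count r

noncomputable def stepKer [DecidableEq σ] (P : PopComputer σ) (C C' : Multiset σ) : ℝ≥0∞ :=
  (∑ t ∈ P.δ, if t.1 ≤ C ∧ C' = C - t.1 + t.2 then (pairCount C t.1 : ℝ≥0∞) else 0) /
      (Nat.choose (Multiset.card C) 2 : ℝ≥0∞) +
    (if C' = C then
      1 - (∑ t ∈ P.δ, (pairCount C t.1 : ℝ≥0∞)) / (Nat.choose (Multiset.card C) 2 : ℝ≥0∞)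
    else 0)

noncomputable def hitKer [DecidableEq σ] (P : PopComputer σ) (A : Set (Multiset σ))
    (C C' : Multiset σ) : ℝ≥0∞ :=
  if C ∈ A then (if C' = C then 1 else 0) else stepKer P C C'

noncomputable def hitIter [DecidableEq σ] (P : PopComputer σ) (A : Set (Multiset σ)) :
    ℕ → Multiset σ → Multiset σ → ℝ≥0∞
  | 0, C, C' => if C' = C then 1 else 0
  | n + 1, C, C' => ∑' D : Multiset σ, hitIter P A n C D * hitKer P A D C'

/-- Expected hitting time of the set `A`, computed as `∑ₜ Pr[Xₜ ∉ A]` for the chain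
absorbed at `A`. -/
noncomputable def expHit [DecidableEq σ] (P : PopComputer σ) (A : Set (Multiset σ))
    (C0 : Multiset σ) : ℝ≥0∞ :=
  ∑' n : ℕ, ∑' C : Multiset σ, if C ∈ A then 0 else hitIter P A n C0 C

def StableConfig [DecidableEq σ] (P : PopComputer σ) (C : Multiset σ) : Prop :=
  ∃ b : Bool, ∀ C', Reaches P C C' → P.O C'.toFinset = some b

noncomputable def expTermination [DecidableEq σ] (P : PopComputer σ) (C0 : Multiset σ) : ℝ≥0∞ :=
  expHit P {C | Terminal P C} C0

noncomputable def expStabilization [DecidableEq σ] (P : PopComputer σ) (C0 : Multiset σ) : ℝ≥0∞ :=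
  expHit P {C | StableConfig P C} C0

/-! Quantifier-free Presburger arithmetic. -/

inductive QFPA (v : ℕ) : Type where
  | threshold (a : Fin v → ℤ) (c : ℤ) : QFPA v
  | remainder (a : Fin v → ℤ) (θ : ℕ) (c : Fin θ) : QFPA v
  | not (φ : QFPA v) : QFPA v
  | and (φ ψ : QFPA v) : QFPA v
  | or (φ ψ : QFPA v) : QFPA v

def QFPA.eval {v : ℕ} : QFPA v → (Fin v → ℕ) → Bool
  | .threshold a c, x => decide (c ≤ ∑ i, a i * (x i : ℤ))
  | .remainder a θ c, x => decide ((∑ i, a i * (x i : ℤ)) % (θ : ℤ) = ((c : ℕ) : ℤ))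
  | .not φ, x => !(QFPA.eval φ x)
  | .and φ ψ, x => QFPA.eval φ x && QFPA.eval ψ x
  | .or φ ψ, x => QFPA.eval φ x || QFPA.eval ψ x

def zsize (z : ℤ) : ℕ := Nat.size z.natAbs + 1

def QFPA.fsize {v : ℕ} : QFPA v → ℕ
  | .threshold a c => (∑ i, zsize (a i)) + zsize c + 1
  | .remainder a θ c => (∑ i, zsize (a i)) + Nat.size θ + Nat.size (c : ℕ) + 1
  | .not φ => QFPA.fsize φ + 1
  | .and φ ψ => QFPA.fsize φ + QFPA.fsize ψ + 1
  | .or φ ψ => QFPA.fsize φ + QFPA.fsize ψ + 1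

def QFPA.double {v : ℕ} : QFPA v → QFPA (v + v)
  | .threshold a c =>
      .threshold (fun i => Fin.addCases (fun j => a j) (fun j => 2 * a j) i) c
  | .remainder a θ c =>
      .remainder (fun i => Fin.addCases (fun j => a j) (fun j => 2 * a j) i) θ c
  | .not φ => .not (QFPA.double φ)
  | .and φ ψ => .and (QFPA.double φ) (QFPA.double ψ)
  | .or φ ψ => .or (QFPA.double φ) (QFPA.double ψ)

def inputConfig {v : ℕ} (lab : Fin v → σ) (x : Fin v → ℕ) : Multiset σ :=
  ∑ i : Fin v, Multiset.replicate (x i) (lab i)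

def DecidesQFPA [DecidableEq σ] {v : ℕ} (P : PopComputer σ) (lab : Fin v → σ)
    (φ : QFPA v) : Prop :=
  Function.Injective lab ∧ P.I = Finset.univ.image lab ∧
    ∀ x : Fin v → ℕ, HasOutput P (inputConfig lab x) (QFPA.eval φ x)

def DecidesQFPAFrom [DecidableEq σ] {v : ℕ} (P : PopComputer σ) (lab : Fin v → σ)
    (φ : QFPA v) (k : ℕ) : Prop :=
  Function.Injective lab ∧ P.I = Finset.univ.image lab ∧
    ∀ x : Fin v → ℕ, k ≤ ∑ i, x i → HasOutput P (inputConfig lab x) (QFPA.eval φ x)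

/-! Potential functions and rapidness. -/

def mweight (w : σ → ℕ) (C : Multiset σ) : ℕ := (C.map w).sum

def IsPotential (P : PopComputer σ) (w : σ → ℕ) : Prop :=
  ∀ t ∈ P.δ, mweight w t.2 + (Multiset.card t.1 - 1) ≤ mweight w t.1

def tmin [DecidableEq σ] (C r : Multiset σ) : ℕ :=
  if h : r.toFinset.Nonempty then r.toFinset.inf' h (fun q => C.count q) else 0

def speedOn [DecidableEq σ] (T : Finset (Multiset σ × Multiset σ)) (C : Multiset σ) : ℕ :=
  ∑ t ∈ T, (tmin C t.1) ^ 2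

def speed [DecidableEq σ] (P : PopComputer σ) (C : Multiset σ) : ℕ := speedOn P.δ C

def RapidAt [DecidableEq σ] (P : PopComputer σ) (w : σ → ℕ) (α : ℝ) (C : Multiset σ) : Prop :=
  ∀ Cterm, Reaches P C Cterm → Terminal P Cterm →
    ((mweight w C : ℝ) - (mweight w Cterm : ℝ)) ^ 2 / α ≤ (speed P C : ℝ)

def countIn [DecidableEq σ] (P : PopComputer σ) (C : Multiset σ) : ℕ :=
  ∑ q ∈ P.I, C.count q

def WellInitialised [DecidableEq σ] (P : PopComputer σ) (C : Multiset σ) : Prop :=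
  ReachableConfig P C ∧ 3 * (countIn P C + Multiset.card P.H) ≤ 2 * Multiset.card C

def outdeg [DecidableEq σ] (P : PopComputer σ) (q : σ) : ℕ :=
  (P.δ.filter (fun t => q ∈ t.1)).card

def IsRapid [DecidableEq σ] (P : PopComputer σ) (α : ℝ) : Prop :=
  (∃ w : σ → ℕ, IsPotential P w ∧ ∀ C, WellInitialised P C → RapidAt P w α C) ∧
  (∃ q0 : σ, ∀ q ∈ P.Q, q ≠ q0 → outdeg P q ≤ 2) ∧
  (∀ C : Multiset σ, IsInput P C → Terminal P C) ∧
  (∀ t ∈ P.δ, ∀ q ∈ P.I, t.1.count q ≤ 1 ∧ t.2.count q = 0)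

def deltaGt [DecidableEq σ] (P : PopComputer σ) (w : σ → ℕ) :
    Finset (Multiset σ × Multiset σ) :=
  P.δ.filter (fun t => mweight w t.2 < mweight w t.1)

def deltaLt [DecidableEq σ] (P : PopComputer σ) (w : σ → ℕ) :
    Finset (Multiset σ × Multiset σ) :=
  P.δ.filter (fun t => mweight w t.1 < mweight w t.2)

def RapidAtGt [DecidableEq σ] (P : PopComputer σ) (w : σ → ℕ) (α : ℝ) (C : Multiset σ) : Prop :=
  ∀ Cterm, Reaches P C Cterm → Terminal P Cterm →
    ((mweight w C : ℝ) - (mweight w Cterm : ℝ)) ^ 2 / α ≤ (speedOn (deltaGt P w) C : ℝ)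

def GroupRapidAt [DecidableEq σ] (P : PopComputer σ) {e : ℕ} (w : Fin e → σ → ℕ) (α : ℝ)
    (C : Multiset σ) : Prop :=
  Terminal P C ∨ ∃ i : Fin e,
    RapidAtGt P (w i) α C ∧
    (∃ t ∈ deltaGt P (w i), t.1 ≤ C) ∧
    (∀ C', Reaches P C C' → ∀ t ∈ deltaLt P (w i), ¬ t.1 ≤ C')

/-- Refinement between computers over the same state space. -/
def Refines [DecidableEq σ] (P' P : PopComputer σ) (π : Multiset σ → Multiset σ) : Prop :=
  (∀ C D, ReachableConfig P' C → ReachableConfig P' D → Step P' C D →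
    Reaches P (π C) (π D)) ∧
  (P.I = P'.I ∧ ∀ CI C, IsInput P' CI → Initial P' CI C →
    ((∃ DI, IsInput P DI ∧ Initial P DI (π C)) ∧
      ∀ q ∈ P.I, (π C).count q = C.count q)) ∧
  (∀ C, ReachableConfig P' C → Terminal P' C →
    Terminal P (π C) ∧ P.O (π C).toFinset = P'.O C.toFinset)


/-! ### Auxiliary development for Proposition 8.14 -/

set_option linter.unusedSectionVars false

section Prop814Aux

variable {σ : Type} [DecidableEq σ]

lemma pairCount_eq_zero {C r : Multiset σ} (h : ¬ r ≤ C) : pairCount C r = 0 := by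
  unfold pairCount
  rw [Multiset.count_eq_zero]
  intro hm
  exact h (Multiset.mem_powersetCard.mp hm).1

lemma pairCount_pos {C r : Multiset σ} (h1 : r ≤ C) (h2 : Multiset.card r = 2) :
    0 < pairCount C r := by
  unfold pairCount
  rw [Multiset.count_pos]
  exact Multiset.mem_powersetCard.mpr ⟨h1, h2⟩

lemma count_map_cons (c : σ) (r : Multiset σ) (M : Multiset (Multiset σ)) :
    (M.map (Multiset.cons c)).count r = if c ∈ r then M.count (r.erase c) else 0 := by
  split_ifs with hc
  · conv_lhs => rw [show r = c ::ₘ r.erase c from (Multiset.cons_erase hc).symm]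
    exact Multiset.count_map_eq_count' _ _ (fun x y h => by
      simpa using congrArg (fun s => Multiset.erase s c) h) _
  · rw [Multiset.count_eq_zero]
    intro hm
    obtain ⟨x, _, rfl⟩ := Multiset.mem_map.mp hm
    exact hc (Multiset.mem_cons_self _ _)

lemma count_map_singleton (x : σ) (s : Multiset σ) :
    (s.map (fun y => (y ::ₘ 0 : Multiset σ))).count (x ::ₘ 0) = s.count x :=
  Multiset.count_map_eq_count' _ _ (fun a b h => by simpa using h) _

lemma powersetCard_one' (s : Multiset σ) :
    Multiset.powersetCard 1 s = s.map (fun y => (y ::ₘ 0 : Multiset σ)) := by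
  rw [Multiset.powersetCard_one]
  rfl

lemma count_pc2_ne {a b : σ} (hab : a ≠ b) (C : Multiset σ) :
    (Multiset.powersetCard 2 C).count (a ::ₘ b ::ₘ 0) = C.count a * C.count b := by
  induction C using Multiset.induction with
  | empty => simp
  | cons c s ih =>
    rw [show (2:ℕ) = 1 + 1 from rfl, Multiset.powersetCard_cons,
      Multiset.count_add, count_map_cons, powersetCard_one']
    simp only [show (1+1:ℕ) = 2 from rfl]
    rw [ih]
    by_cases hca : c = a
    · subst hca
      rw [if_pos (Multiset.mem_cons_self _ _), Multiset.erase_cons_head,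
        count_map_singleton]
      simp [Multiset.count_cons, hab.symm, if_neg hab]
      ring
    · by_cases hcb : c = b
      · subst hcb
        have hmem : c ∈ (a ::ₘ c ::ₘ 0) := by simp
        rw [if_pos hmem]
        have : (a ::ₘ c ::ₘ 0).erase c = (a ::ₘ 0) := by
          rw [Multiset.erase_cons_tail _ (by simpa using Ne.symm hca), Multiset.erase_cons_head]
        rw [this, count_map_singleton]
        simp [Multiset.count_cons, if_neg hab]
        ring
      · have hmem : c ∉ (a ::ₘ b ::ₘ 0) := by simp [hca, hcb]
        rw [if_neg hmem]
        simp [Multiset.count_cons, Ne.symm hca, Ne.symm hcb]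

lemma count_pc2_eq (a : σ) (C : Multiset σ) :
    (Multiset.powersetCard 2 C).count (a ::ₘ a ::ₘ 0) = (C.count a).choose 2 := by
  induction C using Multiset.induction with
  | empty => simp
  | cons c s ih =>
    rw [show (2:ℕ) = 1 + 1 from rfl, Multiset.powersetCard_cons,
      Multiset.count_add, count_map_cons, powersetCard_one']
    simp only [show (1+1:ℕ) = 2 from rfl]
    rw [ih]
    by_cases hca : c = a
    · subst hca
      rw [if_pos (Multiset.mem_cons_self _ _), Multiset.erase_cons_head,
        count_map_singleton]
      rw [Multiset.count_cons_self]
      have hch : ∀ mm : ℕ, (mm + 1).choose 2 = mm.choose 2 + mm := by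
        intro mm
        rw [show (2:ℕ) = 1 + 1 from rfl, Nat.choose_succ_succ, Nat.choose_one_right]
        rw [Nat.succ_eq_one_add]
        omega
      rw [hch]
    · have hmem : c ∉ (a ::ₘ a ::ₘ 0) := by simp [hca]
      rw [if_neg hmem]
      simp [Multiset.count_cons, Ne.symm hca]

lemma tmin_le_count {C r : Multiset σ} {q : σ} (hq : q ∈ r) : tmin C r ≤ C.count q := by
  unfold tmin
  have hne : r.toFinset.Nonempty := ⟨q, Multiset.mem_toFinset.mpr hq⟩
  rw [dif_pos hne]
  exact Finset.inf'_le _ (Multiset.mem_toFinset.mpr hq)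

lemma sq_le_four_choose_two (n : ℕ) : n ^ 2 ≤ 4 * n.choose 2 + 1 := by
  rw [Nat.choose_two_right]
  have hev : 2 ∣ n * (n - 1) := by
    rcases Nat.even_or_odd n with h | h
    · exact Dvd.dvd.mul_right h.two_dvd _
    · obtain ⟨k, hk⟩ := h
      subst hk
      exact ⟨(2 * k + 1) * k, by rw [Nat.add_sub_cancel]; ring⟩
  obtain ⟨k, hk⟩ := hev
  have h1 : 4 * (n * (n - 1) / 2) = 2 * (n * (n - 1)) := by rw [hk]; omega
  rw [h1]
  rcases n with _ | m
  · simp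
  · have hm : (m + 1) * ((m + 1) - 1) = m * m + m := by
      rw [Nat.add_sub_cancel]; ring
    rw [hm]
    nlinarith

lemma tmin_sq_le {C r : Multiset σ} (h2 : Multiset.card r = 2) :
    (tmin C r) ^ 2 ≤ 4 * pairCount C r + 1 := by
  obtain ⟨a, b, rfl⟩ := Multiset.card_eq_two.mp h2
  by_cases hab : a = b
  · subst hab
    have ht := tmin_le_count (C := C) (r := a ::ₘ a ::ₘ 0) (q := a) (by simp)
    have hpc : pairCount C (a ::ₘ a ::ₘ 0) = (C.count a).choose 2 := count_pc2_eq a C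
    calc (tmin C (a ::ₘ a ::ₘ 0)) ^ 2 ≤ (C.count a) ^ 2 := Nat.pow_le_pow_left ht 2
      _ ≤ 4 * (C.count a).choose 2 + 1 := sq_le_four_choose_two _
      _ = 4 * pairCount C (a ::ₘ a ::ₘ 0) + 1 := by rw [hpc]
  · have hta := tmin_le_count (C := C) (r := a ::ₘ b ::ₘ 0) (q := a) (by simp)
    have htb := tmin_le_count (C := C) (r := a ::ₘ b ::ₘ 0) (q := b) (by simp)
    have hpc : pairCount C (a ::ₘ b ::ₘ 0) = C.count a * C.count b := count_pc2_ne hab C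
    calc (tmin C (a ::ₘ b ::ₘ 0)) ^ 2 ≤ C.count a * C.count b := by
          rw [pow_two]; exact Nat.mul_le_mul hta htb
      _ ≤ 4 * pairCount C (a ::ₘ b ::ₘ 0) + 1 := by rw [hpc]; omega

lemma sum_count_le (F : Finset (Multiset σ)) (M : Multiset (Multiset σ)) :
    ∑ r ∈ F, M.count r ≤ Multiset.card M := by
  classical
  have h1 : ∑ r ∈ F, M.count r = ∑ r ∈ F ∩ M.toFinset, M.count r := by
    refine (Finset.sum_subset (Finset.inter_subset_left) ?_).symm
    intro r hr hr2
    rw [Multiset.count_eq_zero]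
    intro hm
    exact hr2 (Finset.mem_inter.mpr ⟨hr, Multiset.mem_toFinset.mpr hm⟩)
  rw [h1]
  calc ∑ r ∈ F ∩ M.toFinset, M.count r ≤ ∑ r ∈ M.toFinset, M.count r :=
        Finset.sum_le_sum_of_subset Finset.inter_subset_right
    _ = Multiset.card M := Multiset.toFinset_sum_count_eq M

lemma sum_pairCount_le (P : PopComputer σ) (C : Multiset σ) :
    ∑ t ∈ P.δ, pairCount C t.1 ≤ (Multiset.card C).choose 2 := by
  classical
  have hinj : ∀ x ∈ P.δ, ∀ y ∈ P.δ, x.1 = y.1 → x = y := by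
    intro x hx y hy hxy
    exact Prod.ext hxy (P.delta_fun x hx y hy hxy)
  have h1 : ∑ t ∈ P.δ, pairCount C t.1
      = ∑ r ∈ P.δ.image Prod.fst, (Multiset.powersetCard 2 C).count r := by
    rw [Finset.sum_image hinj]
    rfl
  rw [h1]
  calc ∑ r ∈ P.δ.image Prod.fst, (Multiset.powersetCard 2 C).count r
      ≤ Multiset.card (Multiset.powersetCard 2 C) := sum_count_le _ _
    _ = (Multiset.card C).choose 2 := by rw [Multiset.card_powersetCard]

end Prop814Aux


section Prop814Dyn

variable {σ : Type} [DecidableEq σ] {P : PopComputer σ}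

lemma csub_eq (C A : Multiset σ) :
    (@HSub.hSub (Multiset σ) (Multiset σ) (Multiset σ)
      (@instHSub (Multiset σ) (@Multiset.instSub σ (fun a b => Classical.propDecidable (a = b))))
      C A) = C - A := by
  have h : (fun a b => Classical.propDecidable (a = b) : DecidableEq σ) = ‹DecidableEq σ› :=
    Subsingleton.elim _ _
  rw [h]

lemma step_iff {C C' : Multiset σ} :
    Step P C C' ↔ ∃ t ∈ P.δ, t.1 ≤ C ∧ C' = C - t.1 + t.2 := by
  unfold Step
  constructor
  · rintro ⟨t, ht, hle, h⟩
    exact ⟨t, ht, hle, by rw [h, csub_eq]⟩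
  · rintro ⟨t, ht, hle, h⟩
    refine ⟨t, ht, hle, ?_⟩
    rw [h, csub_eq]

lemma step_card_eq {C C' : Multiset σ} (h : Step P C C') :
    Multiset.card C' = Multiset.card C := by
  obtain ⟨t, ht, hle, rfl⟩ := step_iff.mp h
  have h2 := (P.delta_card t ht).1
  have h3 : Multiset.card t.1 ≤ Multiset.card C := Multiset.card_le_card hle
  have h4 := congrArg Multiset.card (tsub_add_cancel_of_le hle)
  rw [Multiset.card_add] at h4
  rw [Multiset.card_add]
  omega

lemma reaches_card_eq {C C' : Multiset σ} (h : Reaches P C C') :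
    Multiset.card C' = Multiset.card C := by
  induction h with
  | refl => rfl
  | tail _ hstep ih => rw [step_card_eq hstep, ih]

lemma mweight_add (w : σ → ℕ) (A B : Multiset σ) :
    mweight w (A + B) = mweight w A + mweight w B := by
  unfold mweight
  rw [Multiset.map_add, Multiset.sum_add]

lemma mweight_decomp (w : σ → ℕ) {A C : Multiset σ} (h : A ≤ C) :
    mweight w C = mweight w (C - A) + mweight w A := by
  conv_lhs => rw [← tsub_add_cancel_of_le h]
  rw [mweight_add]

end Prop814Dyn

/-- Bundle of data and hypotheses used in the proof of Proposition 8.14. -/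
structure Setup814 (σ : Type) [DecidableEq σ] where
  P : PopComputer σ
  e : ℕ
  w : Fin e → σ → ℕ
  α : ℝ
  C0 : Multiset σ
  hbin : Binary P
  hα : (1:ℝ) ≤ α
  hrapid : ∀ C, Reaches P C0 C → ¬ Terminal P C →
    ∃ i : Fin e, RapidAtGt P (w i) α C ∧ (∃ t ∈ deltaGt P (w i), t.1 ≤ C) ∧
      (∀ C', Reaches P C C' → ∀ t ∈ deltaLt P (w i), ¬ t.1 ≤ C')

namespace Setup814

variable {σ : Type} [DecidableEq σ] (S : Setup814 σ)

def RR (C : Multiset σ) : Prop := Reaches S.P S.C0 C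

def Phi (i : Fin S.e) (C : Multiset σ) : ℕ := mweight (S.w i) C

/-- index `i` is "activated" at `C` -/
def Act (i : Fin S.e) (C : Multiset σ) : Prop :=
  ∀ C', Reaches S.P C C' → ∀ t ∈ deltaLt S.P (S.w i), ¬ t.1 ≤ C'

lemma alpha_pos : (0:ℝ) < S.α := lt_of_lt_of_le one_pos S.hα

lemma act_mono {i : Fin S.e} {C C' : Multiset σ} (h : Act S i C)
    (hr : Reaches S.P C C') : Act S i C' :=
  fun C'' hr' => h C'' (hr.trans hr')

lemma phi_trans_le {i : Fin S.e} {C : Multiset σ} {t : Multiset σ × Multiset σ}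
    (hAct : Act S i C) (ht : t ∈ S.P.δ) (hle : t.1 ≤ C) :
    Phi S i (C - t.1 + t.2) ≤ Phi S i C := by
  have hnotLt : t ∉ deltaLt S.P (S.w i) := fun hmem =>
    hAct C Relation.ReflTransGen.refl t hmem hle
  have h21 : mweight (S.w i) t.2 ≤ mweight (S.w i) t.1 := by
    by_contra hcon
    exact hnotLt (Finset.mem_filter.mpr ⟨ht, by omega⟩)
  unfold Phi
  rw [mweight_add, mweight_decomp (S.w i) hle]
  omega

lemma phi_gt_trans_lt {i : Fin S.e} {C : Multiset σ} {t : Multiset σ × Multiset σ}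
    (ht : t ∈ deltaGt S.P (S.w i)) (hle : t.1 ≤ C) :
    Phi S i (C - t.1 + t.2) < Phi S i C := by
  have h21 : mweight (S.w i) t.2 < mweight (S.w i) t.1 := (Finset.mem_filter.mp ht).2
  unfold Phi
  rw [mweight_add, mweight_decomp (S.w i) hle]
  omega

lemma phi_step_le {i : Fin S.e} {C C' : Multiset σ} (hAct : Act S i C)
    (h : Step S.P C C') : Phi S i C' ≤ Phi S i C := by
  obtain ⟨t, ht, hle, rfl⟩ := step_iff.mp h
  exact phi_trans_le S hAct ht hle

lemma phi_reaches_le {i : Fin S.e} {C C' : Multiset σ} (hAct : Act S i C)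
    (h : Reaches S.P C C') : Phi S i C' ≤ Phi S i C := by
  induction h with
  | refl => exact le_refl _
  | tail hpre hstep ih =>
      exact le_trans (phi_step_le S (act_mono S hAct hpre) hstep) ih

/-! the well-founded argument showing a terminal configuration is always reachable -/

noncomputable def actCard (C : Multiset σ) : ℕ :=
  (Finset.univ.filter (fun i : Fin S.e => ¬ Act S i C)).card

noncomputable def actMu (C : Multiset σ) : ℕ :=
  ∑ i ∈ Finset.univ.filter (fun i : Fin S.e => Act S i C), Phi S i C

lemma act_filter_mono {C C' : Multiset σ} (h : Step S.P C C') :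
    Finset.univ.filter (fun i : Fin S.e => ¬ Act S i C') ⊆
      Finset.univ.filter (fun i : Fin S.e => ¬ Act S i C) := by
  intro i hi
  rw [Finset.mem_filter] at hi ⊢
  refine ⟨Finset.mem_univ _, fun hA => hi.2 (act_mono S hA (Relation.ReflTransGen.single h))⟩

lemma actCard_step_le {C C' : Multiset σ} (h : Step S.P C C') :
    actCard S C' ≤ actCard S C :=
  Finset.card_le_card (act_filter_mono S h)

lemma termreach_aux : ∀ k b C, Reaches S.P S.C0 C → actCard S C < k → actMu S C < b →
    ∃ Ct, Reaches S.P C Ct ∧ Terminal S.P Ct := by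
  intro k
  induction k with
  | zero => intro b C _ hk _; omega
  | succ k ihk =>
    intro b
    induction b with
    | zero => intro C _ _ hb; omega
    | succ b ihb =>
      intro C hR hk hb
      by_cases hterm : Terminal S.P C
      · exact ⟨C, Relation.ReflTransGen.refl, hterm⟩
      obtain ⟨i, _, ⟨t, htGt, htle⟩, hAct⟩ := S.hrapid C hR hterm
      have htδ : t ∈ S.P.δ := (Finset.mem_filter.mp htGt).1
      have hstep : Step S.P C (C - t.1 + t.2) := step_iff.mpr ⟨t, htδ, htle, rfl⟩
      set C' := C - t.1 + t.2 with hC'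
      have hR' : Reaches S.P S.C0 C' := hR.tail hstep
      have hsub := act_filter_mono S hstep
      by_cases hacteq : actCard S C' = actCard S C
      · have hseteq : Finset.univ.filter (fun i : Fin S.e => ¬ Act S i C') =
            Finset.univ.filter (fun i : Fin S.e => ¬ Act S i C) :=
          Finset.eq_of_subset_of_card_le hsub (le_of_eq hacteq.symm)
        have hposeq : Finset.univ.filter (fun i : Fin S.e => Act S i C') =
            Finset.univ.filter (fun i : Fin S.e => Act S i C) := by
          ext j
          have := Finset.ext_iff.mp hseteq j
          simp only [Finset.mem_filter, Finset.mem_univ, true_and] at this ⊢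
          tauto
        have hμ : actMu S C' < actMu S C := by
          unfold actMu
          rw [hposeq]
          refine Finset.sum_lt_sum ?_ ?_
          · intro j hj
            rw [Finset.mem_filter] at hj
            exact phi_step_le S hj.2 hstep
          · refine ⟨i, Finset.mem_filter.mpr ⟨Finset.mem_univ _, hAct⟩, ?_⟩
            exact phi_gt_trans_lt S htGt htle
        obtain ⟨Ct, h1, h2⟩ := ihb C' hR' (by omega) (by omega)
        exact ⟨Ct, (Relation.ReflTransGen.single hstep).trans h1, h2⟩
      · have hlt : actCard S C' < actCard S C :=
          lt_of_le_of_ne (actCard_step_le S hstep) hacteq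
        obtain ⟨Ct, h1, h2⟩ := ihk (actMu S C' + 1) C' hR' (by omega) (by omega)
        exact ⟨Ct, (Relation.ReflTransGen.single hstep).trans h1, h2⟩

lemma termreach {C : Multiset σ} (hR : RR S C) :
    ∃ Ct, Reaches S.P C Ct ∧ Terminal S.P Ct :=
  termreach_aux S (actCard S C + 1) (actMu S C + 1) C hR (by omega) (by omega)


/-! distance to reachable terminal configurations -/

def TermV (i : Fin S.e) (C : Multiset σ) : Set ℕ :=
  {k | ∃ Ct, Reaches S.P C Ct ∧ Terminal S.P Ct ∧ Phi S i Ct = k}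

noncomputable def mT (i : Fin S.e) (C : Multiset σ) : ℕ := sInf (TermV S i C)

noncomputable def dN (i : Fin S.e) (C : Multiset σ) : ℕ := Phi S i C - mT S i C

lemma termV_nonempty {i : Fin S.e} {C : Multiset σ} (hR : RR S C) :
    (TermV S i C).Nonempty := by
  obtain ⟨Ct, h1, h2⟩ := termreach S hR
  exact ⟨Phi S i Ct, Ct, h1, h2, rfl⟩

lemma mT_mem {i : Fin S.e} {C : Multiset σ} (hR : RR S C) :
    mT S i C ∈ TermV S i C := Nat.sInf_mem (termV_nonempty S hR)

lemma mT_le_phi {i : Fin S.e} {C : Multiset σ} (hR : RR S C) (hAct : Act S i C) :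
    mT S i C ≤ Phi S i C := by
  obtain ⟨Ct, h1, h2, h3⟩ := mT_mem S (i := i) hR
  calc mT S i C = Phi S i Ct := h3.symm
    _ ≤ Phi S i C := phi_reaches_le S hAct h1

lemma mT_step_le {i : Fin S.e} {C C' : Multiset σ} (hR' : RR S C') (h : Step S.P C C') :
    mT S i C ≤ mT S i C' := by
  obtain ⟨Ct, h1, h2, h3⟩ := mT_mem S (i := i) hR'
  rw [← h3]
  exact Nat.sInf_le ⟨Ct, (Relation.ReflTransGen.single h).trans h1, h2, rfl⟩

lemma dN_step_le {i : Fin S.e} {C C' : Multiset σ} (hR : RR S C) (hAct : Act S i C)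
    (h : Step S.P C C') : dN S i C' ≤ dN S i C := by
  have h1 : Phi S i C' ≤ Phi S i C := phi_step_le S hAct h
  have h2 : mT S i C ≤ mT S i C' := mT_step_le S (hR.tail h) h
  unfold dN
  omega

lemma dN_drop {i : Fin S.e} {C : Multiset σ} {t : Multiset σ × Multiset σ}
    (hR : RR S C) (hAct : Act S i C) (htGt : t ∈ deltaGt S.P (S.w i)) (hle : t.1 ≤ C) :
    dN S i (C - t.1 + t.2) + 1 ≤ dN S i C := by
  have htδ : t ∈ S.P.δ := (Finset.mem_filter.mp htGt).1
  have hstep : Step S.P C (C - t.1 + t.2) := step_iff.mpr ⟨t, htδ, hle, rfl⟩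
  have hR' : RR S (C - t.1 + t.2) := hR.tail hstep
  have hmTC : mT S i C ≤ Phi S i C := mT_le_phi S hR hAct
  have hmTC' : mT S i (C - t.1 + t.2) ≤ Phi S i (C - t.1 + t.2) :=
    mT_le_phi S hR' (act_mono S hAct (Relation.ReflTransGen.single hstep))
  have hmT : mT S i C ≤ mT S i (C - t.1 + t.2) := mT_step_le S hR' hstep
  have e1 : Phi S i C = mweight (S.w i) (C - t.1) + mweight (S.w i) t.1 :=
    mweight_decomp _ hle
  have e2 : Phi S i (C - t.1 + t.2) = mweight (S.w i) (C - t.1) + mweight (S.w i) t.2 :=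
    mweight_add _ _ _
  have hgt : mweight (S.w i) t.2 < mweight (S.w i) t.1 := (Finset.mem_filter.mp htGt).2
  unfold dN
  omega

lemma dN_sq_le_speed {i : Fin S.e} {C : Multiset σ} (hR : RR S C) (hAct : Act S i C)
    (hrap : RapidAtGt S.P (S.w i) S.α C) :
    ((dN S i C : ℝ)) ^ 2 ≤ S.α * (speedOn (deltaGt S.P (S.w i)) C : ℝ) := by
  obtain ⟨Ct, h1, h2, h3⟩ := mT_mem S (i := i) hR
  have hrr := hrap Ct h1 h2
  have hc : (dN S i C : ℝ) = (mweight (S.w i) C : ℝ) - (mweight (S.w i) Ct : ℝ) := by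
    have hle : mT S i C ≤ Phi S i C := mT_le_phi S hR hAct
    unfold dN
    rw [Nat.cast_sub hle, ← h3]
    rfl
  rw [hc]
  have := (div_le_iff₀ (alpha_pos S)).mp hrr
  linarith [this]

/-! the numeric potential functions -/

noncomputable def nn : ℕ := Multiset.card S.C0

noncomputable def Bn : ℕ := (S.nn).choose 2

noncomputable def Dn : ℕ := S.P.δ.card

noncomputable def Mx (x : ℕ) : ℝ := max 1 ((x : ℝ) ^ 2 / (4 * S.α) - (S.Dn : ℝ) / 4)

noncomputable def phiR (x : ℕ) : ℝ := (S.Bn : ℝ) / S.Mx x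

noncomputable def GR (d : ℕ) : ℝ := ∑ x ∈ Finset.range d, S.phiR (x + 1)

noncomputable def x0 : ℕ := max 1 ⌈Real.sqrt (2 * S.α * (S.Dn : ℝ))⌉₊

noncomputable def GLb : ℝ := (S.Bn : ℝ) * (S.x0 : ℝ) + 8 * S.α * (S.Bn : ℝ) / (S.x0 : ℝ)

lemma one_le_Mx (x : ℕ) : 1 ≤ S.Mx x := le_max_left _ _

lemma Mx_pos (x : ℕ) : 0 < S.Mx x := lt_of_lt_of_le one_pos (S.one_le_Mx x)

lemma Mx_mono {x y : ℕ} (h : x ≤ y) : S.Mx x ≤ S.Mx y := by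
  refine max_le_max (le_refl 1) (sub_le_sub_right ?_ _)
  have : ((x:ℝ))^2 ≤ ((y:ℝ))^2 := by
    have : (x:ℝ) ≤ (y:ℝ) := Nat.cast_le.mpr h
    nlinarith [Nat.cast_nonneg (α := ℝ) x]
  exact div_le_div_of_nonneg_right this (by have := S.alpha_pos; positivity)

lemma phiR_nonneg (x : ℕ) : 0 ≤ S.phiR x :=
  div_nonneg (Nat.cast_nonneg _) (S.Mx_pos x).le

lemma phiR_le_B (x : ℕ) : S.phiR x ≤ (S.Bn : ℝ) := by
  exact div_le_self (Nat.cast_nonneg _) (S.one_le_Mx x)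

lemma phiR_anti {x y : ℕ} (h : x ≤ y) : S.phiR y ≤ S.phiR x :=
  div_le_div_of_nonneg_left (Nat.cast_nonneg _) (S.Mx_pos x) (S.Mx_mono h)

lemma phiR_mul_Mx (x : ℕ) : S.phiR x * S.Mx x = (S.Bn : ℝ) :=
  div_mul_cancel₀ _ (S.Mx_pos x).ne'

lemma GR_nonneg (d : ℕ) : 0 ≤ S.GR d :=
  Finset.sum_nonneg fun x _ => S.phiR_nonneg _

lemma GR_mono {a b : ℕ} (h : a ≤ b) : S.GR a ≤ S.GR b :=
  Finset.sum_le_sum_of_subset_of_nonneg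
    (Finset.range_subset_range.mpr h) (fun x _ _ => S.phiR_nonneg _)

lemma GR_diff {a b : ℕ} (h : b ≤ a) :
    ((a - b : ℕ) : ℝ) * S.phiR a ≤ S.GR a - S.GR b := by
  have hsplit : S.GR b + ∑ x ∈ Finset.Ico b a, S.phiR (x + 1) = S.GR a := by
    unfold GR
    simp only [Finset.range_eq_Ico]
    exact Finset.sum_Ico_consecutive _ (Nat.zero_le b) h
  have hlow : ((a - b : ℕ) : ℝ) * S.phiR a ≤ ∑ x ∈ Finset.Ico b a, S.phiR (x + 1) := by
    calc ((a - b : ℕ) : ℝ) * S.phiR a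
        = ∑ _x ∈ Finset.Ico b a, S.phiR a := by
          rw [Finset.sum_const, Nat.card_Ico, nsmul_eq_mul]
      _ ≤ ∑ x ∈ Finset.Ico b a, S.phiR (x + 1) := by
          refine Finset.sum_le_sum ?_
          intro x hx
          have hxa : x + 1 ≤ a := (Finset.mem_Ico.mp hx).2
          exact S.phiR_anti hxa
  linarith

lemma one_le_x0 : 1 ≤ S.x0 := le_max_left _ _

lemma GL_nonneg : 0 ≤ S.GLb := by
  unfold GLb
  have h1 : 0 < S.x0 := S.one_le_x0
  have h0 : (0:ℝ) < (S.x0 : ℝ) := Nat.cast_pos.mpr h1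
  have := S.alpha_pos
  positivity

lemma sum_tail_inv_sq (k : ℕ) (hk : 1 ≤ k) (d : ℕ) :
    ∑ x ∈ Finset.range d, (if k < x + 1 then (1:ℝ) / ((x : ℝ) + 1) ^ 2 else 0)
      ≤ 1 / (k : ℝ) := by
  have main : ∀ d : ℕ, ∑ x ∈ Finset.range d, (if k < x + 1 then (1:ℝ) / ((x : ℝ) + 1) ^ 2 else 0)
      ≤ 1 / (k : ℝ) - 1 / ((max k d : ℕ) : ℝ) := by
    intro d
    induction d with
    | zero => simp
    | succ d ih =>
      rw [Finset.sum_range_succ]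
      by_cases hd : k < d + 1
      · have hmax1 : max k d = d := Nat.max_eq_right (by omega)
        have hmax2 : max k (d + 1) = d + 1 := Nat.max_eq_right (by omega)
        rw [hmax1] at ih
        rw [hmax2, if_pos hd]
        have hd1 : (1:ℝ) ≤ (d:ℝ) := by exact_mod_cast (by omega : 1 ≤ d)
        have hdpos : (0:ℝ) < (d:ℝ) := lt_of_lt_of_le one_pos hd1
        have hid : (1:ℝ)/(d:ℝ) - 1/((d:ℝ)+1) = 1/((d:ℝ)*((d:ℝ)+1)) := by
          field_simp
          ring
        have hkey : (1:ℝ)/((d:ℝ)+1)^2 ≤ 1/(d:ℝ) - 1/((d:ℝ)+1) := by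
          rw [hid]
          refine one_div_le_one_div_of_le (by positivity) ?_
          nlinarith
        have hcast : (((d:ℕ) + 1 : ℕ) : ℝ) = (d:ℝ) + 1 := by push_cast; ring
        rw [hcast]
        linarith
      · have hmax1 : max k d = k := Nat.max_eq_left (by omega)
        have hmax2 : max k (d + 1) = k := Nat.max_eq_left (by omega)
        rw [hmax1] at ih
        rw [hmax2, if_neg hd]
        linarith
  calc ∑ x ∈ Finset.range d, (if k < x + 1 then (1:ℝ) / ((x : ℝ) + 1) ^ 2 else 0)
      ≤ 1 / (k : ℝ) - 1 / ((max k d : ℕ) : ℝ) := main d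
    _ ≤ 1 / (k : ℝ) := by
        have : (0:ℝ) ≤ 1 / ((max k d : ℕ) : ℝ) := by positivity
        linarith

lemma phiR_tail_le {x : ℕ} (hx : S.x0 < x + 1) :
    S.phiR (x + 1) ≤ 8 * S.α * (S.Bn : ℝ) * (1 / ((x : ℝ) + 1) ^ 2) := by
  have hα := S.alpha_pos
  have hD0 : (0:ℝ) ≤ 2 * S.α * (S.Dn : ℝ) := by positivity
  have hxx : Real.sqrt (2 * S.α * (S.Dn : ℝ)) ≤ ((x:ℝ) + 1) := by
    have h1 : Real.sqrt (2 * S.α * (S.Dn : ℝ)) ≤ (⌈Real.sqrt (2 * S.α * (S.Dn : ℝ))⌉₊ : ℝ) :=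
      Nat.le_ceil _
    have h2 : (⌈Real.sqrt (2 * S.α * (S.Dn : ℝ))⌉₊ : ℕ) ≤ S.x0 := le_max_right _ _
    have h3 : (S.x0 : ℝ) ≤ (x:ℝ) + 1 := by exact_mod_cast Nat.le_of_lt_succ (by omega)
    calc Real.sqrt (2 * S.α * (S.Dn : ℝ)) ≤ (⌈Real.sqrt (2 * S.α * (S.Dn : ℝ))⌉₊ : ℝ) := h1
      _ ≤ (S.x0 : ℝ) := by exact_mod_cast h2
      _ ≤ (x:ℝ) + 1 := h3
  have hsq : 2 * S.α * (S.Dn : ℝ) ≤ ((x:ℝ) + 1) ^ 2 := by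
    have := Real.sq_sqrt hD0
    nlinarith [Real.sqrt_nonneg (2 * S.α * (S.Dn : ℝ))]
  have hMx : ((x:ℝ) + 1) ^ 2 / (8 * S.α) ≤ S.Mx (x + 1) := by
    have hinner : ((x:ℝ) + 1) ^ 2 / (8 * S.α)
        ≤ (((x+1:ℕ)) : ℝ) ^ 2 / (4 * S.α) - (S.Dn : ℝ) / 4 := by
      have hcast : (((x+1:ℕ)) : ℝ) = (x:ℝ) + 1 := by push_cast; ring
      rw [hcast]
      have e1 : ((x:ℝ) + 1) ^ 2 / (4 * S.α) = 2 * (((x:ℝ) + 1) ^ 2 / (8 * S.α)) := by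
        field_simp
        ring
      have e2 : (S.Dn : ℝ) / 4 ≤ ((x:ℝ) + 1) ^ 2 / (8 * S.α) := by
        rw [div_le_div_iff₀ (by norm_num) (by positivity)]
        nlinarith
      linarith
    exact le_trans hinner (le_max_right _ _)
  have hpos : (0:ℝ) < ((x:ℝ) + 1) ^ 2 / (8 * S.α) := by positivity
  calc S.phiR (x + 1) = (S.Bn : ℝ) / S.Mx (x + 1) := rfl
    _ ≤ (S.Bn : ℝ) / (((x:ℝ) + 1) ^ 2 / (8 * S.α)) :=
        div_le_div_of_nonneg_left (Nat.cast_nonneg _) hpos hMx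
    _ = 8 * S.α * (S.Bn : ℝ) * (1 / ((x : ℝ) + 1) ^ 2) := by
        field_simp

lemma GR_le_GL (d : ℕ) : S.GR d ≤ S.GLb := by
  have hα := S.alpha_pos
  have hx0 := S.one_le_x0
  have hterm : ∀ x ∈ Finset.range d, S.phiR (x + 1)
      ≤ (if x + 1 ≤ S.x0 then (S.Bn : ℝ) else 0)
        + 8 * S.α * (S.Bn : ℝ) * (if S.x0 < x + 1 then 1 / ((x : ℝ) + 1) ^ 2 else 0) := by
    intro x _
    by_cases hx : x + 1 ≤ S.x0
    · rw [if_pos hx, if_neg (by omega)]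
      simpa using S.phiR_le_B (x + 1)
    · rw [if_neg hx, if_pos (by omega)]
      simpa using S.phiR_tail_le (by omega)
  calc S.GR d ≤ ∑ x ∈ Finset.range d,
        ((if x + 1 ≤ S.x0 then (S.Bn : ℝ) else 0)
          + 8 * S.α * (S.Bn : ℝ) * (if S.x0 < x + 1 then 1 / ((x : ℝ) + 1) ^ 2 else 0)) :=
        Finset.sum_le_sum hterm
    _ = (∑ x ∈ Finset.range d, (if x + 1 ≤ S.x0 then (S.Bn : ℝ) else 0))
        + 8 * S.α * (S.Bn : ℝ) *
          (∑ x ∈ Finset.range d, (if S.x0 < x + 1 then 1 / ((x : ℝ) + 1) ^ 2 else 0)) := by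
        rw [Finset.sum_add_distrib, Finset.mul_sum]
    _ ≤ (S.Bn : ℝ) * (S.x0 : ℝ) + 8 * S.α * (S.Bn : ℝ) * (1 / (S.x0 : ℝ)) := by
        have h1 : (∑ x ∈ Finset.range d, (if x + 1 ≤ S.x0 then (S.Bn : ℝ) else 0))
            ≤ (S.Bn : ℝ) * (S.x0 : ℝ) := by
          calc (∑ x ∈ Finset.range d, (if x + 1 ≤ S.x0 then (S.Bn : ℝ) else 0))
              ≤ ∑ x ∈ Finset.range S.x0, (S.Bn : ℝ) := by
                rw [← Finset.sum_filter]
                refine Finset.sum_le_sum_of_subset_of_nonneg ?_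
                  (fun _ _ _ => Nat.cast_nonneg _)
                intro x hx
                rw [Finset.mem_filter, Finset.mem_range] at hx
                rw [Finset.mem_range]
                omega
            _ = (S.Bn : ℝ) * (S.x0 : ℝ) := by
                rw [Finset.sum_const, Finset.card_range, nsmul_eq_mul]
                ring
        have h2 : (∑ x ∈ Finset.range d, (if S.x0 < x + 1 then 1 / ((x : ℝ) + 1) ^ 2 else 0))
            ≤ 1 / (S.x0 : ℝ) := sum_tail_inv_sq S.x0 S.one_le_x0 d
        have h3 : (0:ℝ) ≤ 8 * S.α * (S.Bn : ℝ) := by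
          have := S.alpha_pos
          positivity
        nlinarith [mul_le_mul_of_nonneg_left h2 h3]
    _ = S.GLb := by
        unfold GLb
        rw [mul_one_div]


/-! the real-valued Lyapunov function -/

noncomputable def termF (i : Fin S.e) (C : Multiset σ) : ℝ :=
  if Act S i C then GR S (dN S i C) else S.GLb

noncomputable def hRe (C : Multiset σ) : ℝ := ∑ i : Fin S.e, termF S i C

lemma termF_nonneg (i : Fin S.e) (C : Multiset σ) : 0 ≤ termF S i C := by
  unfold termF
  split_ifs
  · exact S.GR_nonneg _
  · exact S.GL_nonneg

lemma termF_le_GL (i : Fin S.e) (C : Multiset σ) : termF S i C ≤ S.GLb := by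
  unfold termF
  split_ifs
  · exact S.GR_le_GL _
  · exact le_refl _

lemma hRe_nonneg (C : Multiset σ) : 0 ≤ hRe S C :=
  Finset.sum_nonneg fun i _ => S.termF_nonneg i C

lemma hRe_le (C : Multiset σ) : hRe S C ≤ (S.e : ℝ) * S.GLb := by
  calc hRe S C ≤ ∑ _i : Fin S.e, S.GLb := Finset.sum_le_sum (fun i _ => S.termF_le_GL i C)
    _ = (S.e : ℝ) * S.GLb := by
        rw [Finset.sum_const, Finset.card_univ, Fintype.card_fin, nsmul_eq_mul]

lemma termF_step_le {C C' : Multiset σ} (hR : RR S C) (h : Step S.P C C') (i : Fin S.e) :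
    termF S i C' ≤ termF S i C := by
  unfold termF
  by_cases hA : Act S i C
  · rw [if_pos hA, if_pos (act_mono S hA (Relation.ReflTransGen.single h))]
    exact S.GR_mono (dN_step_le S hR hA h)
  · rw [if_neg hA]
    split_ifs
    · exact S.GR_le_GL _
    · exact le_refl _

lemma hRe_step_le {C C' : Multiset σ} (hR : RR S C) (h : Step S.P C C') :
    hRe S C' ≤ hRe S C :=
  Finset.sum_le_sum (fun i _ => S.termF_step_le hR h i)

lemma hRe_drop {i : Fin S.e} {C : Multiset σ} {t : Multiset σ × Multiset σ}
    (hR : RR S C) (hAct : Act S i C) (htGt : t ∈ deltaGt S.P (S.w i)) (hle : t.1 ≤ C) :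
    S.phiR (dN S i C) ≤ hRe S C - hRe S (C - t.1 + t.2) := by
  have htδ : t ∈ S.P.δ := (Finset.mem_filter.mp htGt).1
  have hstep : Step S.P C (C - t.1 + t.2) := step_iff.mpr ⟨t, htδ, hle, rfl⟩
  have hAct' : Act S i (C - t.1 + t.2) := act_mono S hAct (Relation.ReflTransGen.single hstep)
  have hdrop := dN_drop S hR hAct htGt hle
  have hkey : S.phiR (dN S i C) ≤ termF S i C - termF S i (C - t.1 + t.2) := by
    unfold termF
    rw [if_pos hAct, if_pos hAct']
    have h1 : ((dN S i C - dN S i (C - t.1 + t.2) : ℕ) : ℝ) * S.phiR (dN S i C)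
        ≤ S.GR (dN S i C) - S.GR (dN S i (C - t.1 + t.2)) := S.GR_diff (by omega)
    have h2 : (1:ℝ) ≤ ((dN S i C - dN S i (C - t.1 + t.2) : ℕ) : ℝ) := by
      exact_mod_cast (by omega : 1 ≤ dN S i C - dN S i (C - t.1 + t.2))
    nlinarith [S.phiR_nonneg (dN S i C)]
  have hsum : hRe S C - hRe S (C - t.1 + t.2)
      = ∑ j : Fin S.e, (termF S j C - termF S j (C - t.1 + t.2)) := by
    unfold hRe
    rw [Finset.sum_sub_distrib]
  rw [hsum]
  calc S.phiR (dN S i C) ≤ termF S i C - termF S i (C - t.1 + t.2) := hkey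
    _ ≤ ∑ j : Fin S.e, (termF S j C - termF S j (C - t.1 + t.2)) :=
      Finset.single_le_sum (f := fun j => termF S j C - termF S j (C - t.1 + t.2))
        (fun j _ => sub_nonneg.mpr (S.termF_step_le hR hstep j)) (Finset.mem_univ i)

lemma Mx_le_sum_pc {i : Fin S.e} {C : Multiset σ} (hR : RR S C) (hAct : Act S i C)
    (hrap : RapidAtGt S.P (S.w i) S.α C) (hwit : ∃ t ∈ deltaGt S.P (S.w i), t.1 ≤ C) :
    S.Mx (dN S i C) ≤ ∑ t ∈ deltaGt S.P (S.w i), (pairCount C t.1 : ℝ) := by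
  have hα := S.alpha_pos
  refine max_le ?_ ?_
  · obtain ⟨t0, ht0, hle0⟩ := hwit
    have h2 : Multiset.card t0.1 = 2 := S.hbin t0 (Finset.mem_filter.mp ht0).1
    have hpc : 1 ≤ pairCount C t0.1 := pairCount_pos hle0 h2
    calc (1:ℝ) ≤ (pairCount C t0.1 : ℝ) := by exact_mod_cast hpc
      _ ≤ ∑ t ∈ deltaGt S.P (S.w i), (pairCount C t.1 : ℝ) :=
        Finset.single_le_sum (f := fun t => (pairCount C t.1 : ℝ))
          (fun t _ => Nat.cast_nonneg _) ht0
  · have hNat : speedOn (deltaGt S.P (S.w i)) C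
        ≤ 4 * (∑ t ∈ deltaGt S.P (S.w i), pairCount C t.1) + S.Dn := by
      unfold speedOn
      calc ∑ t ∈ deltaGt S.P (S.w i), (tmin C t.1) ^ 2
          ≤ ∑ t ∈ deltaGt S.P (S.w i), (4 * pairCount C t.1 + 1) :=
            Finset.sum_le_sum (fun t ht => tmin_sq_le (S.hbin t (Finset.mem_filter.mp ht).1))
        _ = 4 * (∑ t ∈ deltaGt S.P (S.w i), pairCount C t.1) + (deltaGt S.P (S.w i)).card := by
            rw [Finset.sum_add_distrib, Finset.sum_const, Finset.mul_sum]
            simp [Nat.smul_one_eq_cast]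
        _ ≤ 4 * (∑ t ∈ deltaGt S.P (S.w i), pairCount C t.1) + S.Dn := by
            have hcard : (deltaGt S.P (S.w i)).card ≤ S.Dn :=
              Finset.card_le_card (Finset.filter_subset _ _)
            omega
    have hsq := dN_sq_le_speed S hR hAct hrap
    have hcast : (speedOn (deltaGt S.P (S.w i)) C : ℝ)
        ≤ 4 * (∑ t ∈ deltaGt S.P (S.w i), (pairCount C t.1 : ℝ)) + (S.Dn : ℝ) := by
      exact_mod_cast hNat
    have h2 : ((dN S i C : ℝ)) ^ 2
        ≤ S.α * (4 * (∑ t ∈ deltaGt S.P (S.w i), (pairCount C t.1 : ℝ)) + (S.Dn : ℝ)) :=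
      le_trans hsq (mul_le_mul_of_nonneg_left hcast hα.le)
    have h3 : ((dN S i C : ℝ)) ^ 2 / (4 * S.α)
        ≤ (∑ t ∈ deltaGt S.P (S.w i), (pairCount C t.1 : ℝ)) + (S.Dn : ℝ) / 4 := by
      rw [div_le_iff₀ (by positivity)]
      nlinarith
    linarith

/-- The core real-valued drift inequality at a non-terminal reachable configuration. -/
lemma drift_real {C : Multiset σ} (hR : RR S C) (hterm : ¬ Terminal S.P C) :
    (∑ t ∈ S.P.δ, (if t.1 ≤ C then (pairCount C t.1 : ℝ) * hRe S (C - t.1 + t.2) else 0))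
      + (S.Bn : ℝ)
    ≤ (∑ t ∈ S.P.δ, (pairCount C t.1 : ℝ)) * hRe S C := by
  obtain ⟨i, hrap, hwit, hAct⟩ := S.hrapid C hR hterm
  have key : (S.Bn : ℝ) ≤ ∑ t ∈ S.P.δ,
      ((pairCount C t.1 : ℝ) * hRe S C
        - (if t.1 ≤ C then (pairCount C t.1 : ℝ) * hRe S (C - t.1 + t.2) else 0)) := by
    have step1 : (S.Bn : ℝ) ≤ ∑ t ∈ deltaGt S.P (S.w i),
        ((pairCount C t.1 : ℝ) * hRe S C
          - (if t.1 ≤ C then (pairCount C t.1 : ℝ) * hRe S (C - t.1 + t.2) else 0)) := by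
      have hphiMx : (S.Bn : ℝ) = S.phiR (dN S i C) * S.Mx (dN S i C) :=
        (S.phiR_mul_Mx _).symm
      have hb : S.phiR (dN S i C) * S.Mx (dN S i C)
          ≤ S.phiR (dN S i C) * ∑ t ∈ deltaGt S.P (S.w i), (pairCount C t.1 : ℝ) :=
        mul_le_mul_of_nonneg_left (Mx_le_sum_pc S hR hAct hrap hwit) (S.phiR_nonneg _)
      rw [hphiMx, Finset.mul_sum] at *
      refine le_trans hb (Finset.sum_le_sum ?_)
      intro t ht
      by_cases hle : t.1 ≤ C
      · rw [if_pos hle]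
        have hdrop := hRe_drop S hR hAct ht hle
        have hpc : (0:ℝ) ≤ (pairCount C t.1 : ℝ) := Nat.cast_nonneg _
        have hmm := mul_le_mul_of_nonneg_left hdrop hpc
        rw [mul_sub] at hmm
        linarith
      · rw [if_neg hle]
        have hz : pairCount C t.1 = 0 := pairCount_eq_zero hle
        rw [hz]
        simp
    refine le_trans step1 (Finset.sum_le_sum_of_subset_of_nonneg
      (Finset.filter_subset _ _) ?_)
    intro t ht _
    by_cases hle : t.1 ≤ C
    · rw [if_pos hle]
      have hstep : Step S.P C (C - t.1 + t.2) := step_iff.mpr ⟨t, ht, hle, rfl⟩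
      have hmono := hRe_step_le S hR hstep
      have hpc : (0:ℝ) ≤ (pairCount C t.1 : ℝ) := Nat.cast_nonneg _
      have hmm := mul_le_mul_of_nonneg_left hmono hpc
      linarith
    · rw [if_neg hle, sub_zero]
      exact mul_nonneg (Nat.cast_nonneg _) (S.hRe_nonneg C)
  rw [Finset.sum_sub_distrib, ← Finset.sum_mul] at key
  linarith

end Setup814


section Prop814Markov

variable {σ : Type} [DecidableEq σ] (P : PopComputer σ)

lemma stepKer_support {C C' : Multiset σ} (h : stepKer P C C' ≠ 0) :
    C' = C ∨ Step P C C' := by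
  by_cases hC : C' = C
  · exact Or.inl hC
  unfold stepKer at h
  rw [if_neg hC, add_zero] at h
  have hnum : (∑ t ∈ P.δ, if t.1 ≤ C ∧ C' = C - t.1 + t.2
      then (pairCount C t.1 : ℝ≥0∞) else 0) ≠ 0 := by
    intro h0
    rw [h0, ENNReal.zero_div] at h
    exact h rfl
  obtain ⟨t, ht, hne⟩ := Finset.exists_ne_zero_of_sum_ne_zero hnum
  rw [ne_eq, ite_eq_right_iff] at hne
  push_neg at hne
  exact Or.inr (step_iff.mpr ⟨t, ht, hne.1.1, hne.1.2⟩)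

lemma hitKer_support {A : Set (Multiset σ)} {C C' : Multiset σ}
    (h : hitKer P A C C' ≠ 0) : C' = C ∨ Step P C C' := by
  unfold hitKer at h
  by_cases hA : C ∈ A
  · rw [if_pos hA] at h
    left
    by_contra hne
    rw [if_neg hne] at h
    exact h rfl
  · rw [if_neg hA] at h
    exact stepKer_support P h

lemma hitIter_support {A : Set (Multiset σ)} {C0 : Multiset σ} :
    ∀ N C, hitIter P A N C0 C ≠ 0 → Reaches P C0 C := by
  intro N
  induction N with
  | zero =>
    intro C h
    unfold hitIter at h
    by_cases hC : C = C0
    · subst hC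
      exact Relation.ReflTransGen.refl
    · rw [if_neg hC] at h
      exact absurd rfl h
  | succ N ih =>
    intro C h
    unfold hitIter at h
    have hex : ∃ D, hitIter P A N C0 D * hitKer P A D C ≠ 0 := by
      by_contra hall
      push_neg at hall
      rw [(ENNReal.tsum_eq_zero).mpr hall] at h
      exact h rfl
    obtain ⟨D, hD⟩ := hex
    rw [mul_ne_zero_iff] at hD
    rcases hitKer_support P hD.2 with hEq | hStep
    · exact hEq ▸ ih D hD.1
    · exact (ih D hD.1).tail hStep

lemma expHit_le_of_lyapunov (A : Set (Multiset σ)) (C0 : Multiset σ)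
    (h : Multiset σ → ℝ≥0∞)
    (hdrift : ∀ C, Reaches P C0 C → C ∉ A →
      (∑' C', stepKer P C C' * h C') + 1 ≤ h C) :
    expHit P A C0 ≤ h C0 := by
  set H : ℕ → ℝ≥0∞ := fun N => ∑' C, hitIter P A N C0 C * h C with hH
  have key : ∀ N, (∑' C, (if C ∈ A then 0 else hitIter P A N C0 C)) + H (N+1) ≤ H N := by
    intro N
    have hH1 : H (N+1) = ∑' D, hitIter P A N C0 D * (∑' C', hitKer P A D C' * h C') := by
      rw [hH]
      calc ∑' C, hitIter P A (N+1) C0 C * h C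
          = ∑' C, ∑' D, (hitIter P A N C0 D * hitKer P A D C * h C) := by
            refine tsum_congr (fun C => ?_)
            have hdef : hitIter P A (N+1) C0 C = ∑' D, hitIter P A N C0 D * hitKer P A D C := by
              simp [hitIter]
            rw [hdef, ← ENNReal.tsum_mul_right]
        _ = ∑' D, ∑' C, (hitIter P A N C0 D * hitKer P A D C * h C) := ENNReal.tsum_comm
        _ = ∑' D, hitIter P A N C0 D * (∑' C', hitKer P A D C' * h C') := by
            refine tsum_congr (fun D => ?_)
            rw [← ENNReal.tsum_mul_left]
            exact tsum_congr (fun C => by rw [mul_assoc])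
    have hS : (∑' C, (if C ∈ A then 0 else hitIter P A N C0 C))
        = ∑' D, hitIter P A N C0 D * (if D ∈ A then 0 else 1) := by
      refine tsum_congr (fun C => ?_)
      split_ifs <;> simp
    rw [hH1, hS, ← ENNReal.tsum_add]
    refine ENNReal.tsum_le_tsum (fun D => ?_)
    rw [← mul_add]
    by_cases hD : D ∈ A
    · rw [if_pos hD, zero_add]
      have hinner : (∑' C', hitKer P A D C' * h C') = h D := by
        have hcongr : ∀ C', hitKer P A D C' * h C'
            = (if C' = D then (1:ℝ≥0∞) else 0) * h C' := by
          intro C'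
          unfold hitKer
          rw [if_pos hD]
        rw [tsum_congr hcongr, tsum_eq_single D ?_]
        · rw [if_pos rfl, one_mul]
        · intro b hb
          rw [if_neg hb, zero_mul]
      rw [hinner]
    · rw [if_neg hD]
      by_cases hiter : hitIter P A N C0 D = 0
      · rw [hiter, zero_mul, zero_mul]
      · have hreach := hitIter_support P N D hiter
        have hdft := hdrift D hreach hD
        have hkeq : (∑' C', hitKer P A D C' * h C') = ∑' C', stepKer P D C' * h C' := by
          refine tsum_congr (fun C' => ?_)
          unfold hitKer
          rw [if_neg hD]
        rw [hkeq]
        refine mul_le_mul_of_nonneg_left ?_ (zero_le')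
        rw [add_comm]
        exact hdft
  have tele : ∀ M, (∑ N ∈ Finset.range M,
      ∑' C, (if C ∈ A then 0 else hitIter P A N C0 C)) + H M ≤ H 0 := by
    intro M
    induction M with
    | zero => simp
    | succ M ih =>
      rw [Finset.sum_range_succ, add_assoc]
      calc (∑ N ∈ Finset.range M, ∑' C, (if C ∈ A then 0 else hitIter P A N C0 C))
            + ((∑' C, (if C ∈ A then 0 else hitIter P A M C0 C)) + H (M+1))
          ≤ (∑ N ∈ Finset.range M, ∑' C, (if C ∈ A then 0 else hitIter P A N C0 C)) + H M :=
            add_le_add_right (key M) _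
        _ ≤ H 0 := ih
  have hH0 : H 0 = h C0 := by
    show (∑' C, hitIter P A 0 C0 C * h C) = h C0
    have hcongr : ∀ C, hitIter P A 0 C0 C * h C = (if C = C0 then (1:ℝ≥0∞) else 0) * h C := by
      intro C
      simp [hitIter]
    rw [tsum_congr hcongr, tsum_eq_single C0 ?_]
    · rw [if_pos rfl, one_mul]
    · intro b hb
      rw [if_neg hb, zero_mul]
  unfold expHit
  refine ENNReal.tsum_le_of_sum_range_le (fun M => ?_)
  calc (∑ N ∈ Finset.range M, ∑' C, (if C ∈ A then 0 else hitIter P A N C0 C))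
      ≤ (∑ N ∈ Finset.range M, ∑' C, (if C ∈ A then 0 else hitIter P A N C0 C)) + H M :=
        le_self_add
    _ ≤ H 0 := tele M
    _ = h C0 := hH0

lemma tsum_stepKer_mul (C : Multiset σ) (g : Multiset σ → ℝ≥0∞) :
    ∑' C', stepKer P C C' * g C' =
      (∑ t ∈ P.δ, (if t.1 ≤ C then (pairCount C t.1 : ℝ≥0∞) * g (C - t.1 + t.2) else 0))
          / (Nat.choose (Multiset.card C) 2 : ℝ≥0∞)
        + (1 - (∑ t ∈ P.δ, (pairCount C t.1 : ℝ≥0∞))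
            / (Nat.choose (Multiset.card C) 2 : ℝ≥0∞)) * g C := by
  set B := (Nat.choose (Multiset.card C) 2 : ℝ≥0∞) with hB
  have hsplit : ∀ C', stepKer P C C' * g C'
      = (∑ t ∈ P.δ, ((if t.1 ≤ C ∧ C' = C - t.1 + t.2 then (pairCount C t.1 : ℝ≥0∞) else 0)
            * B⁻¹ * g C'))
        + (if C' = C then 1 - (∑ t ∈ P.δ, (pairCount C t.1 : ℝ≥0∞)) / B else 0) * g C' := by
    intro C'
    unfold stepKer
    rw [← hB, add_mul, div_eq_mul_inv, Finset.sum_mul, Finset.sum_mul]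
  have hdiag : (∑' C', (if C' = C then 1 - (∑ t ∈ P.δ, (pairCount C t.1 : ℝ≥0∞)) / B else 0)
        * g C')
      = (1 - (∑ t ∈ P.δ, (pairCount C t.1 : ℝ≥0∞)) / B) * g C := by
    have hfun : ∀ C', (if C' = C then 1 - (∑ t ∈ P.δ, (pairCount C t.1 : ℝ≥0∞)) / B else 0)
          * g C'
        = (if C' = C then (1 - (∑ t ∈ P.δ, (pairCount C t.1 : ℝ≥0∞)) / B) * g C else 0) := by
      intro C'
      by_cases hC' : C' = C
      · rw [if_pos hC', if_pos hC', hC']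
      · rw [if_neg hC', if_neg hC', zero_mul]
    rw [tsum_congr hfun, tsum_eq_single C (fun b hb => if_neg hb), if_pos rfl]
  have hmain : ∀ t ∈ P.δ,
      (∑' C', ((if t.1 ≤ C ∧ C' = C - t.1 + t.2 then (pairCount C t.1 : ℝ≥0∞) else 0)
          * B⁻¹ * g C'))
      = (if t.1 ≤ C then (pairCount C t.1 : ℝ≥0∞) * g (C - t.1 + t.2) else 0) * B⁻¹ := by
    intro t _
    by_cases ht : t.1 ≤ C
    · have hfun : ∀ C', ((if t.1 ≤ C ∧ C' = C - t.1 + t.2 then (pairCount C t.1 : ℝ≥0∞) else 0)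
            * B⁻¹ * g C')
          = (if C' = C - t.1 + t.2
              then (pairCount C t.1 : ℝ≥0∞) * B⁻¹ * g (C - t.1 + t.2) else 0) := by
        intro C'
        by_cases hC' : C' = C - t.1 + t.2
        · rw [if_pos ⟨ht, hC'⟩, if_pos hC', hC']
        · rw [if_neg (fun hcon => hC' hcon.2), if_neg hC', zero_mul, zero_mul]
      rw [tsum_congr hfun, tsum_eq_single (C - t.1 + t.2) (fun b hb => if_neg hb),
        if_pos rfl, if_pos ht]
      ring
    · have hfun : ∀ C', ((if t.1 ≤ C ∧ C' = C - t.1 + t.2 then (pairCount C t.1 : ℝ≥0∞) else 0)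
            * B⁻¹ * g C') = 0 := by
        intro C'
        rw [if_neg (fun hcon => ht hcon.1), zero_mul, zero_mul]
      rw [tsum_congr hfun, tsum_zero, if_neg ht, zero_mul]
  calc ∑' C', stepKer P C C' * g C'
      = (∑' C', ∑ t ∈ P.δ, ((if t.1 ≤ C ∧ C' = C - t.1 + t.2
            then (pairCount C t.1 : ℝ≥0∞) else 0) * B⁻¹ * g C'))
        + (∑' C', (if C' = C then 1 - (∑ t ∈ P.δ, (pairCount C t.1 : ℝ≥0∞)) / B else 0)
            * g C') := by
        rw [← ENNReal.tsum_add]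
        exact tsum_congr hsplit
    _ = (∑ t ∈ P.δ, (if t.1 ≤ C then (pairCount C t.1 : ℝ≥0∞) * g (C - t.1 + t.2) else 0)) / B
        + (1 - (∑ t ∈ P.δ, (pairCount C t.1 : ℝ≥0∞)) / B) * g C := by
        rw [hdiag, Summable.tsum_finsetSum (fun i _ => ENNReal.summable), Finset.sum_congr rfl hmain]
        congr 1
        rw [div_eq_mul_inv, Finset.sum_mul]

end Prop814Markov


lemma choose_two_le_sq (n : ℕ) : n.choose 2 ≤ n ^ 2 := by
  rw [Nat.choose_two_right]
  calc n * (n - 1) / 2 ≤ n * (n - 1) := Nat.div_le_self _ _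
    _ ≤ n * n := Nat.mul_le_mul_left _ (by omega)
    _ = n ^ 2 := (pow_two n).symm

namespace Setup814

variable {σ : Type} [DecidableEq σ] (S : Setup814 σ)

noncomputable def hE (C : Multiset σ) : ℝ≥0∞ := ENNReal.ofReal (hRe S C)

lemma drift_E {C : Multiset σ} (hR : RR S C) (hterm : ¬ Terminal S.P C) :
    (∑' C', stepKer S.P C C' * hE S C') + 1 ≤ hE S C := by
  have hcard : Multiset.card C = S.nn := reaches_card_eq hR
  obtain ⟨i, hrap, ⟨t0, ht0, hle0⟩, hAct⟩ := S.hrapid C hR hterm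
  have ht0δ : t0 ∈ S.P.δ := (Finset.mem_filter.mp ht0).1
  have hnn2 : 2 ≤ S.nn := by
    have h2 : Multiset.card t0.1 = 2 := S.hbin t0 ht0δ
    have h3 := Multiset.card_le_card hle0
    omega
  rw [tsum_stepKer_mul, hcard]
  set B := ((S.nn).choose 2 : ℝ≥0∞) with hBdef
  have hB0 : B ≠ 0 := by
    rw [hBdef]
    simp only [ne_eq, Nat.cast_eq_zero]
    have := Nat.choose_pos (n := S.nn) (k := 2) hnn2
    omega
  have hBtop : B ≠ ⊤ := ENNReal.natCast_ne_top _
  set Sc := ∑ t ∈ S.P.δ, (pairCount C t.1 : ℝ≥0∞) with hScdef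
  set X := ∑ t ∈ S.P.δ,
      (if t.1 ≤ C then (pairCount C t.1 : ℝ≥0∞) * hE S (C - t.1 + t.2) else 0) with hXdef
  have hScB : Sc ≤ B := by
    rw [hScdef, hBdef]
    calc ∑ t ∈ S.P.δ, (pairCount C t.1 : ℝ≥0∞)
        = ((∑ t ∈ S.P.δ, pairCount C t.1 : ℕ) : ℝ≥0∞) := by rw [Nat.cast_sum]
      _ ≤ ((S.nn).choose 2 : ℝ≥0∞) := by
          have h := sum_pairCount_le S.P C
          rw [hcard] at h
          exact_mod_cast h
  have hdiv1 : Sc / B ≤ 1 := by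
    calc Sc / B ≤ B / B := ENNReal.div_le_div_right hScB B
      _ = 1 := ENNReal.div_self hB0 hBtop
  have hXB : X + B ≤ Sc * hE S C := by
    have hreal := drift_real S hR hterm
    have hXr : X = ENNReal.ofReal (∑ t ∈ S.P.δ,
        (if t.1 ≤ C then (pairCount C t.1 : ℝ) * hRe S (C - t.1 + t.2) else 0)) := by
      rw [hXdef, ENNReal.ofReal_sum_of_nonneg (fun t _ => ?_)]
      · refine Finset.sum_congr rfl (fun t _ => ?_)
        split_ifs with hle
        · unfold hE
          rw [ENNReal.ofReal_mul (Nat.cast_nonneg _), ENNReal.ofReal_natCast]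
        · simp
      · split_ifs with hle
        · exact mul_nonneg (Nat.cast_nonneg _) (S.hRe_nonneg _)
        · exact le_refl _
    have hBr : B = ENNReal.ofReal ((S.Bn : ℝ)) := by
      rw [hBdef, ENNReal.ofReal_natCast]
      rfl
    have hScr : Sc = ENNReal.ofReal (∑ t ∈ S.P.δ, (pairCount C t.1 : ℝ)) := by
      rw [hScdef, ENNReal.ofReal_sum_of_nonneg (fun t _ => Nat.cast_nonneg _)]
      exact Finset.sum_congr rfl (fun t _ => (ENNReal.ofReal_natCast _).symm)
    rw [hXr, hBr, hScr]
    unfold hE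
    rw [← ENNReal.ofReal_add (Finset.sum_nonneg (fun t _ => ?_)) (Nat.cast_nonneg _),
      ← ENNReal.ofReal_mul (Finset.sum_nonneg (fun t _ => Nat.cast_nonneg _))]
    · exact ENNReal.ofReal_le_ofReal hreal
    · split_ifs with hle
      · exact mul_nonneg (Nat.cast_nonneg _) (S.hRe_nonneg _)
      · exact le_refl _
  have hfrac : X / B + 1 ≤ Sc / B * hE S C := by
    have h1 : X / B + 1 = (X + B) / B := by
      rw [ENNReal.add_div, ENNReal.div_self hB0 hBtop]
    rw [h1]
    calc (X + B) / B ≤ (Sc * hE S C) / B := ENNReal.div_le_div_right hXB B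
      _ = Sc / B * hE S C := by
          rw [div_eq_mul_inv, div_eq_mul_inv, mul_right_comm]
  calc X / B + (1 - Sc / B) * hE S C + 1
      = (X / B + 1) + (1 - Sc / B) * hE S C := by rw [add_right_comm]
    _ ≤ Sc / B * hE S C + (1 - Sc / B) * hE S C := add_le_add_left hfrac _
    _ = (Sc / B + (1 - Sc / B)) * hE S C := (add_mul _ _ _).symm
    _ = hE S C := by rw [add_tsub_cancel_of_le hdiv1, one_mul]

lemma Dn_le : S.Dn ≤ (2 * S.P.Q.card) ^ 2 := by
  unfold Dn
  have hinj : Set.InjOn Prod.fst (S.P.δ : Set (Multiset σ × Multiset σ)) := by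
    intro x hx y hy hxy
    exact Prod.ext hxy (S.P.delta_fun x hx y hy hxy)
  rw [← Finset.card_image_of_injOn hinj]
  have hsub : S.P.δ.image Prod.fst ⊆ (Multiset.powersetCard 2 (2 • S.P.Q.val)).toFinset := by
    intro r hr
    obtain ⟨t, ht, rfl⟩ := Finset.mem_image.mp hr
    rw [Multiset.mem_toFinset, Multiset.mem_powersetCard]
    refine ⟨?_, S.hbin t ht⟩
    rw [Multiset.le_iff_count]
    intro q
    by_cases hq : q ∈ t.1
    · have hqQ : q ∈ S.P.Q := S.P.delta_mem t ht q (Multiset.mem_add.mpr (Or.inl hq))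
      rw [Multiset.count_nsmul]
      have h1 : S.P.Q.val.count q = 1 :=
        Multiset.count_eq_one_of_mem S.P.Q.nodup hqQ
      have h2 : t.1.count q ≤ 2 := by
        have h3 := Multiset.count_le_card q t.1
        rw [S.hbin t ht] at h3
        exact h3
      omega
    · rw [Multiset.count_eq_zero_of_notMem hq]
      exact Nat.zero_le _
  calc (S.P.δ.image Prod.fst).card
      ≤ (Multiset.powersetCard 2 (2 • S.P.Q.val)).toFinset.card := Finset.card_le_card hsub
    _ ≤ Multiset.card (Multiset.powersetCard 2 (2 • S.P.Q.val)) := Multiset.toFinset_card_le _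
    _ = (Multiset.card (2 • S.P.Q.val)).choose 2 := Multiset.card_powersetCard _ _
    _ = (2 * S.P.Q.card).choose 2 := by rw [Multiset.card_nsmul]; rfl
    _ ≤ (2 * S.P.Q.card) ^ 2 := choose_two_le_sq _

lemma GLb_le :
    S.GLb ≤ 100 * (Real.sqrt S.α * (S.P.Q.card : ℝ) + S.α) * (S.nn : ℝ) ^ 2 := by
  have hα := S.alpha_pos
  have hα1 := S.hα
  set q : ℝ := (S.P.Q.card : ℝ) with hq
  have hq0 : 0 ≤ q := Nat.cast_nonneg _
  have hsA : 0 ≤ Real.sqrt S.α := Real.sqrt_nonneg _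
  have hBn : (S.Bn : ℝ) ≤ (S.nn : ℝ) ^ 2 := by
    have h := choose_two_le_sq S.nn
    exact_mod_cast h
  have hBn0 : (0:ℝ) ≤ (S.Bn : ℝ) := Nat.cast_nonneg _
  have hN0 : (0:ℝ) ≤ (S.nn : ℝ) ^ 2 := by positivity
  have hDle : (S.Dn : ℝ) ≤ (2 * q) ^ 2 := by
    have h := S.Dn_le
    have h2 : ((S.Dn : ℕ) : ℝ) ≤ (((2 * S.P.Q.card) ^ 2 : ℕ) : ℝ) := Nat.cast_le.mpr h
    calc (S.Dn : ℝ) ≤ (((2 * S.P.Q.card) ^ 2 : ℕ) : ℝ) := h2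
      _ = (2 * q) ^ 2 := by push_cast; ring
  have hy : Real.sqrt (2 * S.α * (S.Dn : ℝ)) ≤ 3 * Real.sqrt S.α * q := by
    have h1 : 2 * S.α * (S.Dn : ℝ) ≤ (3 * Real.sqrt S.α * q) ^ 2 := by
      have h2 : (3 * Real.sqrt S.α * q) ^ 2 = 9 * S.α * q ^ 2 := by
        rw [mul_pow, mul_pow, Real.sq_sqrt hα.le]
        ring
      rw [h2]
      nlinarith [Nat.cast_nonneg (α := ℝ) S.Dn]
    calc Real.sqrt (2 * S.α * (S.Dn : ℝ)) ≤ Real.sqrt ((3 * Real.sqrt S.α * q) ^ 2) :=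
        Real.sqrt_le_sqrt h1
      _ = 3 * Real.sqrt S.α * q := Real.sqrt_sq (by positivity)
  have hx0r : (S.x0 : ℝ) ≤ 3 * Real.sqrt S.α * q + 2 := by
    unfold x0
    rw [Nat.cast_max]
    refine max_le (by push_cast; nlinarith [mul_nonneg hsA hq0]) ?_
    have hceil : (⌈Real.sqrt (2 * S.α * (S.Dn : ℝ))⌉₊ : ℝ)
        < Real.sqrt (2 * S.α * (S.Dn : ℝ)) + 1 :=
      Nat.ceil_lt_add_one (Real.sqrt_nonneg _)
    linarith
  have hx01 : (1:ℝ) ≤ (S.x0 : ℝ) := by exact_mod_cast S.one_le_x0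
  have ht1 : (S.Bn : ℝ) * (S.x0 : ℝ) ≤ (S.nn : ℝ) ^ 2 * (3 * Real.sqrt S.α * q + 2) := by
    refine mul_le_mul hBn hx0r (by linarith) hN0
  have ht2 : 8 * S.α * (S.Bn : ℝ) / (S.x0 : ℝ) ≤ 8 * S.α * (S.nn : ℝ) ^ 2 := by
    calc 8 * S.α * (S.Bn : ℝ) / (S.x0 : ℝ) ≤ 8 * S.α * (S.Bn : ℝ) :=
        div_le_self (by positivity) hx01
      _ ≤ 8 * S.α * (S.nn : ℝ) ^ 2 := by nlinarith
  unfold GLb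
  have hAN : 0 ≤ Real.sqrt S.α * q * (S.nn : ℝ) ^ 2 := by positivity
  nlinarith [mul_nonneg (mul_nonneg hsA hq0) hN0, mul_nonneg hN0 (by linarith : (0:ℝ) ≤ S.α - 1)]

lemma expTermination_le :
    expTermination S.P S.C0 ≤ ENNReal.ofReal
      ((S.e : ℝ) * (100 * (Real.sqrt S.α * (S.P.Q.card : ℝ) + S.α) * (S.nn : ℝ) ^ 2)) := by
  have h1 := expHit_le_of_lyapunov S.P {C | Terminal S.P C} S.C0 (hE S)
    (fun C hreach hA => drift_E S hreach hA)
  refine le_trans h1 ?_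
  unfold hE
  refine ENNReal.ofReal_le_ofReal ?_
  calc hRe S S.C0 ≤ (S.e : ℝ) * S.GLb := S.hRe_le S.C0
    _ ≤ (S.e : ℝ) * (100 * (Real.sqrt S.α * (S.P.Q.card : ℝ) + S.α) * (S.nn : ℝ) ^ 2) :=
      mul_le_mul_of_nonneg_left S.GLb_le (Nat.cast_nonneg _)

end Setup814

/-- Proposition 8.14: termination time from rapidly decreasing potential groups. -/
theorem stmt17 :
    ∃ c : ℕ, 0 < c ∧
      ∀ (σ : Type) [DecidableEq σ] (P : PopComputer σ),
        IsProtocol P →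
        ∀ (e : ℕ) (w : Fin e → σ → ℕ) (α : ℝ) (m : ℕ), 1 ≤ α →
          (∀ C, ReachableConfig P C → m ≤ Multiset.card C → GroupRapidAt P w α C) →
          ∀ C0 : Multiset σ, IsInput P C0 → m ≤ Multiset.card C0 →
            expTermination P C0 ≤
              ENNReal.ofReal ((c : ℝ) * (e : ℝ) *
                (Real.sqrt α * (P.Q.card : ℝ) + α) * (Multiset.card C0 : ℝ) ^ 2) := by
  refine ⟨100, by norm_num, ?_⟩
  intro σ _ P hproto e w α m hα hgroup C0 hinput hm
  have hH0 : P.H = 0 := hproto.2.1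
  have hrapid' : ∀ C, Reaches P C0 C → ¬ Terminal P C →
      ∃ i : Fin e, RapidAtGt P (w i) α C ∧ (∃ t ∈ deltaGt P (w i), t.1 ≤ C) ∧
        (∀ C', Reaches P C C' → ∀ t ∈ deltaLt P (w i), ¬ t.1 ≤ C') := by
    intro C hreach hterm
    have hRC : ReachableConfig P C := by
      refine ⟨C0, C0, hinput, ⟨0, ?_, ?_, ?_⟩, hreach⟩
      · intro qq hqq
        exact absurd hqq (Multiset.notMem_zero qq)
      · rw [hH0]
      · rw [add_zero]
    have hcard : m ≤ Multiset.card C := by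
      rw [reaches_card_eq hreach]
      exact hm
    exact (hgroup C hRC hcard).resolve_left hterm
  set S : Setup814 σ := ⟨P, e, w, α, C0, hproto.1, hα, hrapid'⟩ with hS
  have hmain := Setup814.expTermination_le S
  refine le_trans hmain (ENNReal.ofReal_le_ofReal (le_of_eq ?_))
  show (e : ℝ) * (100 * (Real.sqrt α * (P.Q.card : ℝ) + α) * (Multiset.card C0 : ℝ) ^ 2)
    = ((100:ℕ) : ℝ) * (e : ℝ) * (Real.sqrt α * (P.Q.card : ℝ) + α) * (Multiset.card C0 : ℝ) ^ 2
  push_cast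
  ring

end PaperPP
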